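/- Let 1 < p < ∞ with conjugate exponent p′ (1/p + 1/p′ = 1), let w : ℤ → (0,∞) be a weight, and let T be a linear operator on the space of all complex sequences on ℤ. Suppose there are constants M₁, M₂ ∈ (0,∞) such that ‖Tφ‖_{ℓ^p(ℤ,w)} ≤ M₁ ‖φ‖_{ℓ^p(ℤ,w)} for every φ with ‖φ‖_{ℓ^p(ℤ,w)} < ∞, and ‖Tφ‖_{ℓ^{p′}(ℤ,1/w)} ≤ M₂ ‖φ‖_{ℓ^{p′}(ℤ,1/w)} for every φ with ‖φ‖_{ℓ^{p′}(ℤ,1/w)} < ∞. Then T is bounded on ℓ²(ℤ) and ‖Tφ‖_{ℓ²(ℤ)} ≤ (M₁ M₂)^{1/2} ‖φ‖_{ℓ²(ℤ)} for every φ ∈ ℓ²(ℤ). -/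

import Mathlib

open scoped ENNReal

/-- The norm of `φ` in the weighted space `ℓ^r(ℤ,u)` (with value in `[0,∞]`). -/
noncomputable def wNorm (r : ℝ) (u : ℤ → ℝ) (φ : ℤ → ℂ) : ℝ≥0∞ :=
  (∑' k : ℤ, ENNReal.ofReal (‖φ k‖ * u k) ^ r) ^ (1 / r)

/-- Convolution of a sequence `c : ℤ → ℂ` with a finitely supported `φ`. -/
noncomputable def conv (c : ℤ → ℂ) (φ : ℤ →₀ ℂ) : ℤ → ℂ :=
  fun j => ∑ k ∈ φ.support, c (j - k) * φ k

/-- The multiplier norm `N_{r,u}(c)` of a sequence `c : ℤ → ℂ` on `ℓ^r(ℤ,u)`. -/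
noncomputable def multNorm (r : ℝ) (u : ℤ → ℝ) (c : ℤ → ℂ) : ℝ≥0∞ :=
  ⨆ φ : {φ : ℤ →₀ ℂ // φ ≠ 0}, wNorm r u (conv c φ.1) / wNorm r u (φ.1 : ℤ → ℂ)

namespace Interp




lemma wNorm_eq_sum {r : ℝ} (hr : 0 < r) {u : ℤ → ℝ} (hu : ∀ k, 0 ≤ u k) (f : ℤ → ℂ)
    (F : Finset ℤ) (hf : ∀ k ∉ F, f k = 0) :
    wNorm r u f = ENNReal.ofReal ((∑ k ∈ F, (‖f k‖ * u k) ^ r) ^ (1 / r)) := by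
  have hterm : ∀ k, ENNReal.ofReal (‖f k‖ * u k) ^ r = ENNReal.ofReal ((‖f k‖ * u k) ^ r) :=
    fun k => ENNReal.ofReal_rpow_of_nonneg (mul_nonneg (norm_nonneg _) (hu k)) hr.le
  have h0 : ∀ k ∉ F, ENNReal.ofReal (‖f k‖ * u k) ^ r = 0 := by
    intro k hk
    rw [hf k hk]
    simp [ENNReal.zero_rpow_of_pos hr]
  rw [wNorm, tsum_eq_sum h0]
  rw [← ENNReal.ofReal_rpow_of_nonneg
    (Finset.sum_nonneg fun k _ => Real.rpow_nonneg (mul_nonneg (norm_nonneg _) (hu k)) r)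
    (by positivity)]
  congr 1
  rw [ENNReal.ofReal_sum_of_nonneg
    (fun k _ => Real.rpow_nonneg (mul_nonneg (norm_nonneg _) (hu k)) r)]
  exact Finset.sum_congr rfl fun k _ => hterm k

lemma sum_le_wNorm {r : ℝ} (hr : 0 < r) {u : ℤ → ℝ} (hu : ∀ k, 0 ≤ u k) (f : ℤ → ℂ)
    (F : Finset ℤ) :
    ENNReal.ofReal ((∑ k ∈ F, (‖f k‖ * u k) ^ r) ^ (1 / r)) ≤ wNorm r u f := by
  rw [← ENNReal.ofReal_rpow_of_nonneg
    (Finset.sum_nonneg fun k _ => Real.rpow_nonneg (mul_nonneg (norm_nonneg _) (hu k)) r)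
    (by positivity)]
  apply ENNReal.rpow_le_rpow _ (by positivity)
  rw [ENNReal.ofReal_sum_of_nonneg
    (fun k _ => Real.rpow_nonneg (mul_nonneg (norm_nonneg _) (hu k)) r)]
  calc ∑ k ∈ F, ENNReal.ofReal ((‖f k‖ * u k) ^ r)
      = ∑ k ∈ F, ENNReal.ofReal (‖f k‖ * u k) ^ r := by
        refine Finset.sum_congr rfl fun k _ => ?_
        exact (ENNReal.ofReal_rpow_of_nonneg (mul_nonneg (norm_nonneg _) (hu k)) hr.le).symm
    _ ≤ ∑' k : ℤ, ENNReal.ofReal (‖f k‖ * u k) ^ r := ENNReal.sum_le_tsum F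

lemma single_le_wNorm {r : ℝ} (hr : 0 < r) {u : ℤ → ℝ} (hu : ∀ k, 0 ≤ u k) (f : ℤ → ℂ)
    (k : ℤ) : ENNReal.ofReal (‖f k‖ * u k) ≤ wNorm r u f := by
  have := sum_le_wNorm hr hu f {k}
  rw [Finset.sum_singleton, ← Real.rpow_mul (mul_nonneg (norm_nonneg _) (hu k)),
    mul_one_div, div_self hr.ne', Real.rpow_one] at this
  exact this

lemma wNorm_le_of_forall_sum {r : ℝ} (hr : 0 < r) {u : ℤ → ℝ} (hu : ∀ k, 0 ≤ u k)
    (f : ℤ → ℂ) {C : ℝ}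
    (h : ∀ G : Finset ℤ, ∑ k ∈ G, (‖f k‖ * u k) ^ r ≤ C) :
    wNorm r u f ≤ ENNReal.ofReal (C ^ (1 / r)) := by
  rw [← ENNReal.ofReal_rpow_of_nonneg (le_trans (by positivity : (0:ℝ) ≤ _) (h ∅)) (by positivity)]
  apply ENNReal.rpow_le_rpow _ (by positivity)
  rw [ENNReal.tsum_eq_iSup_sum]
  apply iSup_le
  intro G
  calc ∑ k ∈ G, ENNReal.ofReal (‖f k‖ * u k) ^ r
      = ENNReal.ofReal (∑ k ∈ G, (‖f k‖ * u k) ^ r) := by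
        rw [ENNReal.ofReal_sum_of_nonneg
          (fun k _ => Real.rpow_nonneg (mul_nonneg (norm_nonneg _) (hu k)) r)]
        exact Finset.sum_congr rfl fun k _ =>
          ENNReal.ofReal_rpow_of_nonneg (mul_nonneg (norm_nonneg _) (hu k)) hr.le
    _ ≤ ENNReal.ofReal C := ENNReal.ofReal_le_ofReal (h G)

lemma sum_le_toReal_wNorm {r : ℝ} (hr : 0 < r) {u : ℤ → ℝ} (hu : ∀ k, 0 ≤ u k) (f : ℤ → ℂ)
    (F : Finset ℤ) (hfin : wNorm r u f ≠ ⊤) :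
    (∑ k ∈ F, (‖f k‖ * u k) ^ r) ^ (1 / r) ≤ (wNorm r u f).toReal :=
  (ENNReal.ofReal_le_iff_le_toReal hfin).mp (sum_le_wNorm hr hu f F)



/-- The analytic family of sequences used in the three-lines argument. -/
noncomputable def vz (a b c d : ℝ) (f : ℤ → ℂ) (w : ℤ → ℝ) (z : ℂ) (k : ℤ) : ℂ :=
  (f k / ‖f k‖) * (‖f k‖ : ℂ) ^ ((a : ℂ) + z * ((b : ℂ) - (a : ℂ)))
    * ((w k : ℂ)) ^ ((c : ℂ) + z * ((d : ℂ) - (c : ℂ)))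

lemma vz_zero {a b c d : ℝ} {f : ℤ → ℂ} {w : ℤ → ℝ} {z : ℂ} {k : ℤ} (h : f k = 0) :
    vz a b c d f w z k = 0 := by
  simp [vz, h]

lemma re_aux (a b : ℝ) (z : ℂ) : ((a : ℂ) + z * ((b : ℂ) - (a : ℂ))).re = a + z.re * (b - a) := by
  simp [Complex.add_re, Complex.mul_re, Complex.sub_re, Complex.sub_im]

lemma vz_norm {a b c d : ℝ} {f : ℤ → ℂ} {w : ℤ → ℝ} {z : ℂ} {k : ℤ} (hw : 0 < w k)
    (h : f k ≠ 0) :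
    ‖vz a b c d f w z k‖ =
      ‖f k‖ ^ (a + z.re * (b - a)) * (w k) ^ (c + z.re * (d - c)) := by
  have hfk : (0:ℝ) < ‖f k‖ := norm_pos_iff.mpr h
  rw [vz, norm_mul, norm_mul, norm_div]
  rw [Complex.norm_cpow_eq_rpow_re_of_pos hfk,
    Complex.norm_cpow_eq_rpow_re_of_pos hw,
    re_aux, re_aux]
  rw [Complex.norm_real, Real.norm_eq_abs, abs_of_pos hfk, div_self hfk.ne']
  ring

lemma vz_half {a b c d : ℝ} {f : ℤ → ℂ} {w : ℤ → ℝ}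
    (hab : a + b = 2) (hcd : c + d = 0) :
    vz a b c d f w (1/2 : ℂ) = f := by
  funext k
  by_cases h : f k = 0
  · rw [vz_zero h, h]
  · have e1 : ((a : ℂ) + (1/2 : ℂ) * ((b : ℂ) - (a : ℂ))) = 1 := by
      have : ((a : ℂ) + (1/2 : ℂ) * ((b : ℂ) - (a : ℂ))) = (((a + b)/2 : ℝ) : ℂ) := by
        push_cast; ring
      rw [this, hab]; norm_num
    have e2 : ((c : ℂ) + (1/2 : ℂ) * ((d : ℂ) - (c : ℂ))) = 0 := by
      have : ((c : ℂ) + (1/2 : ℂ) * ((d : ℂ) - (c : ℂ))) = (((c + d)/2 : ℝ) : ℂ) := by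
        push_cast; ring
      rw [this, hcd]; norm_num
    have hfk : (‖f k‖ : ℂ) ≠ 0 := by
      simpa using (norm_pos_iff.mpr h).ne'
    rw [vz, e1, e2, Complex.cpow_one, Complex.cpow_zero, mul_one, div_mul_cancel₀ _ hfk]

lemma vz_diff {a b c d : ℝ} {f : ℤ → ℂ} {w : ℤ → ℝ} (hw : ∀ k, 0 < w k) (k : ℤ) :
    Differentiable ℂ (fun z => vz a b c d f w z k) := by
  by_cases h : f k = 0
  · have : (fun z => vz a b c d f w z k) = fun _ => 0 := funext fun z => vz_zero h
    rw [this]; exact differentiable_const 0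
  · have hfk : (‖f k‖ : ℂ) ≠ 0 := by simpa using (norm_pos_iff.mpr h).ne'
    have hwk : ((w k : ℝ) : ℂ) ≠ 0 := by
      simpa using (hw k).ne'
    apply Differentiable.mul
    · apply Differentiable.mul (differentiable_const _)
      exact Differentiable.const_cpow (by fun_prop) (Or.inl hfk)
    · exact Differentiable.const_cpow (by fun_prop) (Or.inl hwk)

lemma eq_sum_single (h : ℤ → ℂ) (F : Finset ℤ) (h0 : ∀ k ∉ F, h k = 0) :
    h = ∑ k ∈ F, h k • (Pi.single k 1 : ℤ → ℂ) := by
  funext m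
  rw [Finset.sum_apply]
  by_cases hm : m ∈ F
  · rw [Finset.sum_eq_single m]
    · simp
    · intro k _ hkm
      simp [Pi.single_apply, (Ne.symm hkm : ¬ m = k)]
    · intro h; exact absurd hm h
  · rw [h0 m hm, Finset.sum_eq_zero]
    intro k hk
    have : m ≠ k := fun e => hm (e ▸ hk)
    simp [Pi.single_apply, this]

lemma apply_T (T : (ℤ → ℂ) →ₗ[ℂ] (ℤ → ℂ)) (h : ℤ → ℂ) (F : Finset ℤ)
    (h0 : ∀ k ∉ F, h k = 0) (j : ℤ) :
    T h j = ∑ k ∈ F, h k * T (Pi.single k 1 : ℤ → ℂ) j := by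
  conv_lhs => rw [eq_sum_single h F h0]
  rw [map_sum]
  rw [Finset.sum_apply]
  refine Finset.sum_congr rfl fun k _ => ?_
  rw [map_smul]
  rfl

/-- `x^t ≤ x^s₀ + x^s₁` for `x > 0` and `s₀ ≤ t ≤ s₁`. -/
lemma rpow_le_add {x t s₀ s₁ : ℝ} (hx : 0 < x) (h0 : s₀ ≤ t) (h1 : t ≤ s₁) :
    x ^ t ≤ x ^ s₀ + x ^ s₁ := by
  rcases le_total x 1 with hx1 | hx1
  · have : x ^ t ≤ x ^ s₀ := Real.rpow_le_rpow_of_exponent_ge hx hx1 h0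
    nlinarith [Real.rpow_pos_of_pos hx s₁]
  · have : x ^ t ≤ x ^ s₁ := Real.rpow_le_rpow_of_exponent_le hx1 h1
    nlinarith [Real.rpow_pos_of_pos hx s₀]

/-- Uniform bound for `‖vz ... z k‖` on the closed strip. -/
lemma vz_norm_le {a b c d : ℝ} {f : ℤ → ℂ} {w : ℤ → ℝ} (hw : ∀ k, 0 < w k) {z : ℂ}
    (hz0 : 0 ≤ z.re) (hz1 : z.re ≤ 1) (k : ℤ) :
    ‖vz a b c d f w z k‖ ≤
      (‖f k‖ ^ a + ‖f k‖ ^ b) * ((w k) ^ c + (w k) ^ d) := by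
  by_cases h : f k = 0
  · rw [vz_zero h, norm_zero]
    have := hw k
    positivity
  · rw [vz_norm (hw k) h]
    have hfk : (0:ℝ) < ‖f k‖ := norm_pos_iff.mpr h
    have h1 : ‖f k‖ ^ (a + z.re * (b - a)) ≤ ‖f k‖ ^ a + ‖f k‖ ^ b := by
      rcases le_total a b with hab | hab
      · exact rpow_le_add hfk (by nlinarith) (by nlinarith)
      · have := rpow_le_add hfk (t := a + z.re * (b - a)) (s₀ := b) (s₁ := a)
          (by nlinarith) (by nlinarith)
        linarith
    have h2 : (w k) ^ (c + z.re * (d - c)) ≤ (w k) ^ c + (w k) ^ d := by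
      rcases le_total c d with hcd | hcd
      · exact rpow_le_add (hw k) (by nlinarith) (by nlinarith)
      · have := rpow_le_add (hw k) (t := c + z.re * (d - c)) (s₀ := d) (s₁ := c)
          (by nlinarith) (by nlinarith)
        linarith
    have hA : (0:ℝ) ≤ ‖f k‖ ^ (a + z.re * (b - a)) := Real.rpow_nonneg (norm_nonneg _) _
    have hB : (0:ℝ) ≤ (w k) ^ c + (w k) ^ d := by
      have := hw k; positivity
    exact mul_le_mul h1 h2 (Real.rpow_nonneg (hw k).le _) (by positivity)


/-- One edge estimate for the pairing, for a generic bounded operator on `ℓ^r(u)`. -/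
lemma edge_bound {r r' : ℝ} (hrr' : r.HolderConjugate r')
    {u : ℤ → ℝ} (hu : ∀ k, 0 < u k)
    (T : (ℤ → ℂ) →ₗ[ℂ] (ℤ → ℂ)) {M : ℝ} (hM : 0 < M)
    (hT : ∀ φ : ℤ → ℂ, wNorm r u φ ≠ ⊤ → wNorm r u (T φ) ≤ ENNReal.ofReal M * wNorm r u φ)
    (f g : ℤ → ℂ) (F G : Finset ℤ)
    (X Y : ℤ → ℂ) (hX0 : ∀ k ∉ F, X k = 0)
    (hXnorm : ∀ k ∈ F, (‖X k‖ * u k) ^ r = ‖f k‖ ^ (2:ℝ))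
    (hYnorm : ∀ j ∈ G, (‖Y j‖ * (u j)⁻¹) ^ r' = ‖g j‖ ^ (2:ℝ)) :
    ‖∑ j ∈ G, T X j * Y j‖ ≤
      M * (∑ k ∈ F, ‖f k‖ ^ (2:ℝ)) ^ (1/r) * (∑ j ∈ G, ‖g j‖ ^ (2:ℝ)) ^ (1/r') := by
  have hr : 0 < r := hrr'.pos
  have hr' : 0 < r' := hrr'.symm.pos
  set Q := ∑ k ∈ F, ‖f k‖ ^ (2:ℝ) with hQ
  set R := ∑ j ∈ G, ‖g j‖ ^ (2:ℝ) with hR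
  have hQ0 : 0 ≤ Q := Finset.sum_nonneg fun k _ => Real.rpow_nonneg (norm_nonneg _) _
  have hR0 : 0 ≤ R := Finset.sum_nonneg fun j _ => Real.rpow_nonneg (norm_nonneg _) _
  have hXw : wNorm r u X = ENNReal.ofReal (Q ^ (1/r)) := by
    rw [wNorm_eq_sum hr (fun k => (hu k).le) X F hX0]
    congr 2
    exact Finset.sum_congr rfl hXnorm
  have hXfin : wNorm r u X ≠ ⊤ := by rw [hXw]; exact ENNReal.ofReal_ne_top
  have hTX : wNorm r u (T X) ≤ ENNReal.ofReal (M * Q ^ (1/r)) := by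
    rw [ENNReal.ofReal_mul hM.le, ← hXw]
    exact hT X hXfin
  have hTXfin : wNorm r u (T X) ≠ ⊤ := ne_top_of_le_ne_top ENNReal.ofReal_ne_top hTX
  calc ‖∑ j ∈ G, T X j * Y j‖
      ≤ ∑ j ∈ G, ‖T X j‖ * ‖Y j‖ := by
        refine (norm_sum_le _ _).trans (le_of_eq ?_)
        exact Finset.sum_congr rfl fun j _ => norm_mul _ _
    _ = ∑ j ∈ G, (‖T X j‖ * u j) * (‖Y j‖ * (u j)⁻¹) := by
        refine Finset.sum_congr rfl fun j _ => ?_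
        rw [mul_mul_mul_comm, mul_inv_cancel₀ (hu j).ne', mul_one]
    _ ≤ (∑ j ∈ G, (‖T X j‖ * u j) ^ r) ^ (1/r) * (∑ j ∈ G, (‖Y j‖ * (u j)⁻¹) ^ r') ^ (1/r') := by
        refine Real.inner_le_Lp_mul_Lq_of_nonneg G hrr' ?_ ?_
        · exact fun j _ => mul_nonneg (norm_nonneg _) (hu j).le
        · exact fun j _ => mul_nonneg (norm_nonneg _) (inv_nonneg.mpr (hu j).le)
    _ ≤ (M * Q ^ (1/r)) * R ^ (1/r') := by
        have h2 : (∑ j ∈ G, (‖Y j‖ * (u j)⁻¹) ^ r') = R := Finset.sum_congr rfl hYnorm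
        rw [h2]
        refine mul_le_mul_of_nonneg_right ?_ (Real.rpow_nonneg hR0 _)
        refine (sum_le_toReal_wNorm hr (fun k => (hu k).le) _ G hTXfin).trans ?_
        calc (wNorm r u (T X)).toReal ≤ (ENNReal.ofReal (M * Q ^ (1/r))).toReal :=
              ENNReal.toReal_mono ENNReal.ofReal_ne_top hTX
          _ = M * Q ^ (1/r) := ENNReal.toReal_ofReal (mul_nonneg hM.le (Real.rpow_nonneg hQ0 _))
    _ = M * Q ^ (1/r) * R ^ (1/r') := by ring

lemma pairing_bound (p p' : ℝ) (hpc : p.HolderConjugate p')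
    (w : ℤ → ℝ) (hw : ∀ k, 0 < w k) (T : (ℤ → ℂ) →ₗ[ℂ] (ℤ → ℂ))
    (M₁ M₂ : ℝ) (hM₁ : 0 < M₁) (hM₂ : 0 < M₂)
    (h1 : ∀ φ : ℤ → ℂ, wNorm p w φ ≠ ⊤ →
      wNorm p w (T φ) ≤ ENNReal.ofReal M₁ * wNorm p w φ)
    (h2 : ∀ φ : ℤ → ℂ, wNorm p' (fun k => (w k)⁻¹) φ ≠ ⊤ →
      wNorm p' (fun k => (w k)⁻¹) (T φ) ≤
        ENNReal.ofReal M₂ * wNorm p' (fun k => (w k)⁻¹) φ)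
    (f g : ℤ → ℂ) (F G : Finset ℤ) (hf : ∀ k ∉ F, f k = 0) (hg : ∀ j ∉ G, g j = 0) :
    ‖∑ j ∈ G, T f j * g j‖ ≤ Real.sqrt (M₁ * M₂) *
      Real.sqrt (∑ k ∈ F, ‖f k‖ ^ (2:ℝ)) * Real.sqrt (∑ j ∈ G, ‖g j‖ ^ (2:ℝ)) := by
  have hp0 : 0 < p := hpc.pos
  have hp'0 : 0 < p' := hpc.symm.pos
  set a : ℝ := 2/p with ha_def
  set b : ℝ := 2/p' with hb_def
  have hab : a + b = 2 := by
    have h := hpc.inv_add_inv_eq_one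
    rw [ha_def, hb_def, div_add_div _ _ hp0.ne' hp'0.ne', div_eq_iff (by positivity)]
    field_simp at h ⊢
    linarith
  set Q := ∑ k ∈ F, ‖f k‖ ^ (2:ℝ) with hQdef
  set R := ∑ j ∈ G, ‖g j‖ ^ (2:ℝ) with hRdef
  have hQ0 : 0 ≤ Q := Finset.sum_nonneg fun k _ => Real.rpow_nonneg (norm_nonneg _) _
  have hR0 : 0 ≤ R := Finset.sum_nonneg fun j _ => Real.rpow_nonneg (norm_nonneg _) _
  set vzf : ℂ → ℤ → ℂ := fun z => vz a b (-1) 1 f w z with hvzf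
  set vzg : ℂ → ℤ → ℂ := fun z => vz b a 1 (-1) g w z with hvzg
  set Φ : ℂ → ℂ := fun z => ∑ j ∈ G, T (vzf z) j * vzg z j with hΦ
  have hvf0 : ∀ z : ℂ, ∀ k ∉ F, vzf z k = 0 := fun z k hk => vz_zero (hf k hk)
  have repr : ∀ (z : ℂ) (j : ℤ), T (vzf z) j =
      ∑ k ∈ F, vzf z k * T (Pi.single k 1 : ℤ → ℂ) j :=
    fun z j => apply_T T _ F (hvf0 z) j
  -- differentiability
  have hdiff : Differentiable ℂ Φ := by
    have hrw : Φ = fun z => ∑ j ∈ G,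
        (∑ k ∈ F, vzf z k * T (Pi.single k 1 : ℤ → ℂ) j) * vzg z j :=
      funext fun z => Finset.sum_congr rfl fun j _ => by rw [repr z j]
    rw [hrw]
    refine Differentiable.fun_sum fun j _ => Differentiable.mul ?_ (vz_diff hw j)
    exact Differentiable.fun_sum fun k _ => (vz_diff hw k).mul_const _
  -- boundedness on the strip
  have hbdd : BddAbove ((norm ∘ Φ) ''
      (Complex.HadamardThreeLines.verticalClosedStrip 0 1)) := by
    set Bf : ℤ → ℝ := fun k => (‖f k‖ ^ a + ‖f k‖ ^ b) * ((w k) ^ (-1:ℝ) + (w k) ^ (1:ℝ))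
      with hBf
    set Bg : ℤ → ℝ := fun j => (‖g j‖ ^ b + ‖g j‖ ^ a) * ((w j) ^ (1:ℝ) + (w j) ^ (-1:ℝ))
      with hBg
    have hBf0 : ∀ k, 0 ≤ Bf k := fun k => by
      have h1 : (0:ℝ) ≤ ‖f k‖ ^ a := Real.rpow_nonneg (norm_nonneg _) _
      have h2 : (0:ℝ) ≤ ‖f k‖ ^ b := Real.rpow_nonneg (norm_nonneg _) _
      have h3 : (0:ℝ) ≤ (w k) ^ (-1:ℝ) := Real.rpow_nonneg (hw k).le _
      have h4 : (0:ℝ) ≤ (w k) ^ (1:ℝ) := Real.rpow_nonneg (hw k).le _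
      positivity
    have hBg0 : ∀ j, 0 ≤ Bg j := fun j => by
      have h1 : (0:ℝ) ≤ ‖g j‖ ^ b := Real.rpow_nonneg (norm_nonneg _) _
      have h2 : (0:ℝ) ≤ ‖g j‖ ^ a := Real.rpow_nonneg (norm_nonneg _) _
      have h3 : (0:ℝ) ≤ (w j) ^ (1:ℝ) := Real.rpow_nonneg (hw j).le _
      have h4 : (0:ℝ) ≤ (w j) ^ (-1:ℝ) := Real.rpow_nonneg (hw j).le _
      positivity
    refine ⟨∑ j ∈ G, (∑ k ∈ F, Bf k * ‖T (Pi.single k 1 : ℤ → ℂ) j‖) * Bg j, ?_⟩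
    rintro x ⟨z, hz, rfl⟩
    have hz' : z.re ∈ Set.Icc (0:ℝ) 1 := hz
    have hz0 : 0 ≤ z.re := hz'.1
    have hz1 : z.re ≤ 1 := hz'.2
    calc ‖Φ z‖ ≤ ∑ j ∈ G, ‖T (vzf z) j‖ * ‖vzg z j‖ := by
          refine (norm_sum_le _ _).trans (le_of_eq ?_)
          exact Finset.sum_congr rfl fun j _ => norm_mul _ _
      _ ≤ ∑ j ∈ G, (∑ k ∈ F, Bf k * ‖T (Pi.single k 1 : ℤ → ℂ) j‖) * Bg j := by
          refine Finset.sum_le_sum fun j _ => ?_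
          refine mul_le_mul ?_ (vz_norm_le hw hz0 hz1 j) (norm_nonneg _) ?_
          · refine (le_of_eq (congrArg norm (repr z j))).trans
              ((norm_sum_le _ _).trans ?_)
            refine Finset.sum_le_sum fun k _ => ?_
            rw [norm_mul]
            exact mul_le_mul_of_nonneg_right (vz_norm_le hw hz0 hz1 k) (norm_nonneg _)
          · exact Finset.sum_nonneg fun k _ =>
              mul_nonneg (hBf0 k) (norm_nonneg _)
  -- edge estimates
  have he0 : ∀ z ∈ Complex.re ⁻¹' {0}, ‖Φ z‖ ≤ M₁ * Q ^ (1/p) * R ^ (1/p') := by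
    intro z hz
    have hzre : z.re = 0 := hz
    refine edge_bound hpc hw T hM₁ h1 f g F G (vzf z) (vzg z) (hvf0 z) ?_ ?_
    · intro k _
      show (‖vz a b (-1) 1 f w z k‖ * w k) ^ p = ‖f k‖ ^ (2:ℝ)
      by_cases hfk : f k = 0
      · rw [vz_zero hfk, norm_zero, zero_mul, Real.zero_rpow hp0.ne', hfk,
          norm_zero, Real.zero_rpow (by norm_num : (2:ℝ) ≠ 0)]
      · rw [vz_norm (hw k) hfk, hzre]
        simp only [zero_mul, add_zero]
        rw [Real.rpow_neg_one, mul_assoc, inv_mul_cancel₀ (hw k).ne', mul_one,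
          ← Real.rpow_mul (norm_nonneg _)]
        congr 1
        rw [ha_def]; field_simp
    · intro j _
      show (‖vz b a 1 (-1) g w z j‖ * (w j)⁻¹) ^ p' = ‖g j‖ ^ (2:ℝ)
      by_cases hgj : g j = 0
      · rw [vz_zero hgj, norm_zero, zero_mul, Real.zero_rpow hp'0.ne', hgj,
          norm_zero, Real.zero_rpow (by norm_num : (2:ℝ) ≠ 0)]
      · rw [vz_norm (hw j) hgj, hzre]
        simp only [zero_mul, add_zero]
        rw [Real.rpow_one, mul_assoc, mul_inv_cancel₀ (hw j).ne', mul_one,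
          ← Real.rpow_mul (norm_nonneg _)]
        congr 1
        rw [hb_def]; field_simp
  have he1 : ∀ z ∈ Complex.re ⁻¹' {1}, ‖Φ z‖ ≤ M₂ * Q ^ (1/p') * R ^ (1/p) := by
    intro z hz
    have hzre : z.re = 1 := hz
    refine edge_bound hpc.symm (fun k => inv_pos.mpr (hw k)) T hM₂ h2 f g F G
      (vzf z) (vzg z) (hvf0 z) ?_ ?_
    · intro k _
      show (‖vz a b (-1) 1 f w z k‖ * (w k)⁻¹) ^ p' = ‖f k‖ ^ (2:ℝ)
      by_cases hfk : f k = 0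
      · rw [vz_zero hfk, norm_zero, zero_mul, Real.zero_rpow hp'0.ne', hfk,
          norm_zero, Real.zero_rpow (by norm_num : (2:ℝ) ≠ 0)]
      · rw [vz_norm (hw k) hfk, hzre]
        have e1 : a + 1 * (b - a) = b := by ring
        have e2 : (-1:ℝ) + 1 * (1 - -1) = 1 := by norm_num
        rw [e1, e2, Real.rpow_one, mul_assoc, mul_inv_cancel₀ (hw k).ne', mul_one,
          ← Real.rpow_mul (norm_nonneg _)]
        congr 1
        rw [hb_def]; field_simp
    · intro j _
      show (‖vz b a 1 (-1) g w z j‖ * ((w j)⁻¹)⁻¹) ^ p = ‖g j‖ ^ (2:ℝ)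
      by_cases hgj : g j = 0
      · rw [vz_zero hgj, norm_zero, zero_mul, Real.zero_rpow hp0.ne', hgj,
          norm_zero, Real.zero_rpow (by norm_num : (2:ℝ) ≠ 0)]
      · rw [inv_inv, vz_norm (hw j) hgj, hzre]
        have e3 : b + 1 * (a - b) = a := by ring
        have e4 : (1:ℝ) + 1 * (-1 - 1) = -1 := by norm_num
        rw [e3, e4, Real.rpow_neg_one, mul_assoc, inv_mul_cancel₀ (hw j).ne', mul_one,
          ← Real.rpow_mul (norm_nonneg _)]
        congr 1
        rw [ha_def]; field_simp
  -- Hadamard three lines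
  have hmem : (1/2 : ℂ) ∈ Complex.HadamardThreeLines.verticalClosedStrip 0 1 := by
    show (1/2 : ℂ).re ∈ Set.Icc (0:ℝ) 1
    norm_num
  have hHad := Complex.HadamardThreeLines.norm_le_interp_of_mem_verticalClosedStrip₀₁' Φ
    hmem hdiff.diffContOnCl hbdd he0 he1
  have hre : (1/2 : ℂ).re = 1/2 := by norm_num
  rw [hre] at hHad
  have hval : Φ (1/2 : ℂ) = ∑ j ∈ G, T f j * g j := by
    have h1f : vzf (1/2 : ℂ) = f := vz_half hab (by norm_num)
    have h1g : vzg (1/2 : ℂ) = g := vz_half (by linarith) (by norm_num)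
    show (∑ j ∈ G, T (vzf (1/2:ℂ)) j * vzg (1/2:ℂ) j) = _
    rw [h1f, h1g]
  rw [hval] at hHad
  refine hHad.trans (le_of_eq ?_)
  have h11 : (1 : ℝ) - 1/2 = 1/2 := by norm_num
  rw [h11]
  have hpq1 : 1/p + 1/p' = (1:ℝ) := by
    rw [one_div, one_div]; exact hpc.inv_add_inv_eq_one
  rw [← Real.mul_rpow
    (mul_nonneg (mul_nonneg hM₁.le (Real.rpow_nonneg hQ0 _)) (Real.rpow_nonneg hR0 _))
    (mul_nonneg (mul_nonneg hM₂.le (Real.rpow_nonneg hQ0 _)) (Real.rpow_nonneg hR0 _))]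
  have hprod : M₁ * Q ^ (1/p) * R ^ (1/p') * (M₂ * Q ^ (1/p') * R ^ (1/p))
      = (M₁ * M₂) * Q * R := by
    have hQQ : Q ^ (1/p) * Q ^ (1/p') = Q := by
      rw [← Real.rpow_add' hQ0 (by rw [hpq1]; norm_num), hpq1, Real.rpow_one]
    have hRR : R ^ (1/p') * R ^ (1/p) = R := by
      rw [← Real.rpow_add' hR0 (by rw [add_comm, hpq1]; norm_num),
        add_comm (1/p') (1/p), hpq1, Real.rpow_one]
    calc M₁ * Q ^ (1/p) * R ^ (1/p') * (M₂ * Q ^ (1/p') * R ^ (1/p))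
        = (M₁ * M₂) * (Q ^ (1/p) * Q ^ (1/p')) * (R ^ (1/p') * R ^ (1/p)) := by ring
      _ = (M₁ * M₂) * Q * R := by rw [hQQ, hRR]
  rw [hprod]
  rw [Real.mul_rpow (mul_nonneg (mul_nonneg hM₁.le hM₂.le) hQ0) hR0,
    Real.mul_rpow (mul_nonneg hM₁.le hM₂.le) hQ0]
  rw [Real.sqrt_eq_rpow, Real.sqrt_eq_rpow, Real.sqrt_eq_rpow]

lemma rpow_two_eq (x : ℝ) : x ^ (2:ℝ) = x ^ 2 := by
  rw [show (2:ℝ) = ((2:ℕ):ℝ) by norm_num, Real.rpow_natCast]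

lemma sum_sq_bound (p p' : ℝ) (hpc : p.HolderConjugate p')
    (w : ℤ → ℝ) (hw : ∀ k, 0 < w k) (T : (ℤ → ℂ) →ₗ[ℂ] (ℤ → ℂ))
    (M₁ M₂ : ℝ) (hM₁ : 0 < M₁) (hM₂ : 0 < M₂)
    (h1 : ∀ φ : ℤ → ℂ, wNorm p w φ ≠ ⊤ →
      wNorm p w (T φ) ≤ ENNReal.ofReal M₁ * wNorm p w φ)
    (h2 : ∀ φ : ℤ → ℂ, wNorm p' (fun k => (w k)⁻¹) φ ≠ ⊤ →
      wNorm p' (fun k => (w k)⁻¹) (T φ) ≤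
        ENNReal.ofReal M₂ * wNorm p' (fun k => (w k)⁻¹) φ)
    (f : ℤ → ℂ) (F : Finset ℤ) (hf : ∀ k ∉ F, f k = 0) (G : Finset ℤ) :
    ∑ j ∈ G, ‖T f j‖ ^ 2 ≤ (M₁ * M₂) * ∑ k ∈ F, ‖f k‖ ^ 2 := by
  set g : ℤ → ℂ := fun j => if j ∈ G then (starRingEnd ℂ) (T f j) else 0 with hgdef
  have hg : ∀ j ∉ G, g j = 0 := fun j hj => by simp [hgdef, hj]
  have hpair := pairing_bound p p' hpc w hw T M₁ M₂ hM₁ hM₂ h1 h2 f g F G hf hg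
  set S := ∑ j ∈ G, ‖T f j‖ ^ 2 with hSdef
  set Q := ∑ k ∈ F, ‖f k‖ ^ 2 with hQdef
  have hS0 : 0 ≤ S := Finset.sum_nonneg fun j _ => sq_nonneg _
  have hQ0 : 0 ≤ Q := Finset.sum_nonneg fun k _ => sq_nonneg _
  -- identify the pairing with S
  have hsum : ∑ j ∈ G, T f j * g j = ((S : ℝ) : ℂ) := by
    rw [hSdef]
    push_cast
    refine Finset.sum_congr rfl fun j hj => ?_
    rw [hgdef]
    simp only [if_pos hj]
    rw [Complex.mul_conj']
  have hQ2 : (∑ k ∈ F, ‖f k‖ ^ (2:ℝ)) = Q := by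
    rw [hQdef]; exact Finset.sum_congr rfl fun k _ => rpow_two_eq _
  have hR2 : (∑ j ∈ G, ‖g j‖ ^ (2:ℝ)) = S := by
    rw [hSdef]
    refine Finset.sum_congr rfl fun j hj => ?_
    rw [hgdef]
    simp only [if_pos hj]
    rw [rpow_two_eq, RCLike.norm_conj]
  rw [hsum, hQ2, hR2] at hpair
  have hpair' : S ≤ Real.sqrt (M₁*M₂) * Real.sqrt Q * Real.sqrt S := by
    calc S = ‖((S:ℝ):ℂ)‖ := by rw [Complex.norm_real, Real.norm_eq_abs, abs_of_nonneg hS0]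
      _ ≤ _ := hpair
  rcases eq_or_lt_of_le hS0 with hS | hS
  · rw [← hS]; positivity
  · have hCS : Real.sqrt S ≤ Real.sqrt (M₁*M₂) * Real.sqrt Q := by
      have h : Real.sqrt S * Real.sqrt S ≤ (Real.sqrt (M₁*M₂) * Real.sqrt Q) * Real.sqrt S := by
        calc Real.sqrt S * Real.sqrt S = S := Real.mul_self_sqrt hS0
          _ ≤ _ := hpair'
      exact le_of_mul_le_mul_right h (Real.sqrt_pos.mpr hS)
    calc S = Real.sqrt S * Real.sqrt S := (Real.mul_self_sqrt hS0).symm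
      _ ≤ (Real.sqrt (M₁*M₂) * Real.sqrt Q) * (Real.sqrt (M₁*M₂) * Real.sqrt Q) :=
          mul_le_mul hCS hCS (Real.sqrt_nonneg _)
            (mul_nonneg (Real.sqrt_nonneg _) (Real.sqrt_nonneg _))
      _ = (Real.sqrt (M₁*M₂) * Real.sqrt (M₁*M₂)) * (Real.sqrt Q * Real.sqrt Q) := by ring
      _ = (M₁ * M₂) * Q := by
          rw [Real.mul_self_sqrt (mul_nonneg hM₁.le hM₂.le), Real.mul_self_sqrt hQ0]

open Filter Topology in
lemma tendsto_Fn : Tendsto (fun n : ℕ => Finset.Icc (-(n:ℤ)) n) atTop atTop := by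
  apply Filter.tendsto_atTop_finset_of_monotone
  · intro n m hnm
    apply Finset.Icc_subset_Icc <;> omega
  · intro x
    exact ⟨x.natAbs, by simp only [Finset.mem_Icc]; omega⟩

/-- truncation of a sequence to `[-n, n]`. -/
noncomputable def trunc (h : ℤ → ℂ) (n : ℕ) : ℤ → ℂ :=
  fun k => if k ∈ Finset.Icc (-(n:ℤ)) n then h k else 0

lemma wNorm_mono {r : ℝ} (hr : 0 < r) {u : ℤ → ℝ} (hu : ∀ k, 0 ≤ u k) {f g : ℤ → ℂ}
    (h : ∀ k, ‖f k‖ ≤ ‖g k‖) : wNorm r u f ≤ wNorm r u g := by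
  apply ENNReal.rpow_le_rpow _ (by positivity)
  refine ENNReal.tsum_le_tsum fun k => ?_
  exact ENNReal.rpow_le_rpow (ENNReal.ofReal_le_ofReal
    (mul_le_mul_of_nonneg_right (h k) (hu k))) hr.le

open Filter Topology in
lemma tendsto_wNorm_sub_trunc {r : ℝ} (hr : 0 < r) {u : ℤ → ℝ} (hu : ∀ k, 0 ≤ u k)
    (h : ℤ → ℂ) (hfin : wNorm r u h ≠ ⊤) :
    Tendsto (fun n => wNorm r u (h - trunc h n)) atTop (𝓝 0) := by
  set t : ℤ → ℝ≥0∞ := fun k => ENNReal.ofReal (‖h k‖ * u k) ^ r with ht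
  have htfin : ∑' k, t k ≠ ⊤ := by
    intro hc
    apply hfin
    rw [wNorm, hc, ENNReal.top_rpow_of_pos (by positivity)]
  have hkey : ∀ n, wNorm r u (h - trunc h n)
      = (∑' k : {x // x ∉ Finset.Icc (-(n:ℤ)) n}, t k) ^ (1/r) := by
    intro n
    rw [wNorm]
    congr 1
    have hts : ∑' (k : {x : ℤ // x ∉ Finset.Icc (-(n:ℤ)) n}), t ↑k
        = ∑' k, ({x : ℤ | x ∉ Finset.Icc (-(n:ℤ)) n}).indicator t k := tsum_subtype _ t
    rw [hts]
    apply tsum_congr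
    intro k
    by_cases hk : k ∈ Finset.Icc (-(n:ℤ)) n
    · have hz : (h - trunc h n) k = 0 := by simp [trunc, hk]
      rw [hz, Set.indicator_of_notMem (by simpa using hk)]
      simp [ENNReal.zero_rpow_of_pos hr]
    · have hz : (h - trunc h n) k = h k := by simp [trunc, hk]
      rw [hz, Set.indicator_of_mem (by simpa using hk)]
  have h1 : Tendsto (fun n : ℕ => ∑' k : {x // x ∉ Finset.Icc (-(n:ℤ)) (n:ℤ)}, t k) atTop (𝓝 0) :=
    (ENNReal.tendsto_tsum_compl_atTop_zero htfin).comp tendsto_Fn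
  have h2 : Tendsto (fun n : ℕ => (∑' k : {x // x ∉ Finset.Icc (-(n:ℤ)) (n:ℤ)}, t k) ^ (1/r))
      atTop (𝓝 ((0 : ℝ≥0∞) ^ (1/r))) :=
    ((ENNReal.continuous_rpow_const (y := 1/r)).tendsto 0).comp h1
  rw [ENNReal.zero_rpow_of_pos (by positivity)] at h2
  exact h2.congr fun n => (hkey n).symm

open Filter Topology in
lemma tendsto_apply_trunc {r : ℝ} (hr : 0 < r) {u : ℤ → ℝ} (hu : ∀ k, 0 < u k)
    (T : (ℤ → ℂ) →ₗ[ℂ] (ℤ → ℂ)) {M : ℝ}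
    (hT : ∀ φ : ℤ → ℂ, wNorm r u φ ≠ ⊤ → wNorm r u (T φ) ≤ ENNReal.ofReal M * wNorm r u φ)
    (h : ℤ → ℂ) (hfin : wNorm r u h ≠ ⊤) (j : ℤ) :
    Tendsto (fun n => T (trunc h n) j) atTop (𝓝 (T h j)) := by
  have hd := tendsto_wNorm_sub_trunc hr (fun k => (hu k).le) h hfin
  have hdfin : ∀ n, wNorm r u (h - trunc h n) ≠ ⊤ := by
    intro n
    refine ne_top_of_le_ne_top hfin (wNorm_mono hr (fun k => (hu k).le) fun k => ?_)
    by_cases hk : k ∈ Finset.Icc (-(n:ℤ)) n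
    · simp [trunc, hk]
    · simp [trunc, hk]
  have hTd : Tendsto (fun n => wNorm r u (T (h - trunc h n))) atTop (𝓝 0) := by
    have hlim : Tendsto (fun n => ENNReal.ofReal M * wNorm r u (h - trunc h n))
        atTop (𝓝 0) := by
      have := ENNReal.Tendsto.const_mul (a := ENNReal.ofReal M) hd
        (Or.inr ENNReal.ofReal_ne_top)
      simpa using this
    exact tendsto_of_tendsto_of_tendsto_of_le_of_le tendsto_const_nhds hlim
      (fun n => zero_le) (fun n => hT _ (hdfin n))
  have h2 : Tendsto (fun n => ENNReal.ofReal (‖T (h - trunc h n) j‖ * u j)) atTop (𝓝 0) :=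
    tendsto_of_tendsto_of_tendsto_of_le_of_le tendsto_const_nhds hTd (fun n => zero_le)
      (fun n => single_le_wNorm hr (fun k => (hu k).le) _ j)
  have h3 : Tendsto (fun n => ‖T (h - trunc h n) j‖ * u j) atTop (𝓝 0) := by
    have h4 := (ENNReal.tendsto_toReal (show (0:ℝ≥0∞) ≠ ⊤ by simp)).comp h2
    rw [show ((0:ℝ≥0∞)).toReal = 0 by simp] at h4
    exact h4.congr fun n => ENNReal.toReal_ofReal (mul_nonneg (norm_nonneg _) (hu j).le)
  have hcoord : Tendsto (fun n => ‖T (h - trunc h n) j‖) atTop (𝓝 0) := by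
    have h5 := h3.mul_const (u j)⁻¹
    rw [zero_mul] at h5
    exact h5.congr fun n => by
      rw [mul_assoc, mul_inv_cancel₀ (hu j).ne', mul_one]
  have h6 : Tendsto (fun n => T (h - trunc h n) j) atTop (𝓝 0) :=
    tendsto_zero_iff_norm_tendsto_zero.mpr hcoord
  have h7 := (tendsto_const_nhds (x := T h j) (f := atTop)).sub h6
  rw [sub_zero] at h7
  refine h7.congr fun n => ?_
  have : T (trunc h n) = T h - T (h - trunc h n) := by
    rw [← map_sub]
    congr 1
    funext k
    simp
  rw [this]
  rfl

end Interp

open Interp Filter Topology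

/-- **Interpolation between `ℓ^p(ℤ,w)` and its associate space `ℓ^{p′}(ℤ,1/w)`** (via the
Lozanovskii formula `(X^{1/2}(X′)^{1/2})(ℤ) = ℓ²(ℤ)`): a linear operator on the space of
all sequences which is bounded on `ℓ^p(ℤ,w)` with constant `M₁` and on `ℓ^{p′}(ℤ,1/w)`
with constant `M₂` is bounded on `ℓ²(ℤ)` with constant `(M₁M₂)^{1/2}`. -/
theorem interpolation_ell2 (p p' : ℝ) (hp : 1 < p) (hpq : 1 / p + 1 / p' = 1)
    (w : ℤ → ℝ) (hw : ∀ k, 0 < w k) (T : (ℤ → ℂ) →ₗ[ℂ] (ℤ → ℂ))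
    (M₁ M₂ : ℝ) (hM₁ : 0 < M₁) (hM₂ : 0 < M₂)
    (h1 : ∀ φ : ℤ → ℂ, wNorm p w φ ≠ ⊤ →
      wNorm p w (T φ) ≤ ENNReal.ofReal M₁ * wNorm p w φ)
    (h2 : ∀ φ : ℤ → ℂ, wNorm p' (fun k => (w k)⁻¹) φ ≠ ⊤ →
      wNorm p' (fun k => (w k)⁻¹) (T φ) ≤
        ENNReal.ofReal M₂ * wNorm p' (fun k => (w k)⁻¹) φ) :
    ∀ φ : ℤ → ℂ, wNorm 2 (fun _ => 1) φ ≠ ⊤ →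
      wNorm 2 (fun _ => 1) (T φ) ≤
        ENNReal.ofReal (Real.sqrt (M₁ * M₂)) * wNorm 2 (fun _ => 1) φ := by
  intro φ hφ
  have hpc : p.HolderConjugate p' := Real.holderConjugate_iff.mpr ⟨hp, by rw [inv_eq_one_div, inv_eq_one_div]; exact hpq⟩
  have hp0 : 0 < p := hpc.pos
  have hp'0 : 0 < p' := hpc.symm.pos
  set S := ∑' k : ℤ, ENNReal.ofReal (‖φ k‖ * 1) ^ (2:ℝ) with hSdef
  have hwn : wNorm 2 (fun _ => 1) φ = S ^ (1/(2:ℝ)) := rfl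
  have hS : S ≠ ⊤ := by
    intro hc
    apply hφ
    rw [hwn, hc, ENNReal.top_rpow_of_pos (by norm_num)]
  set gg : ℤ → ℝ := fun k => ‖φ k‖ ^ (2/p) * (w k)⁻¹ with hggdef
  set hh : ℤ → ℝ := fun k => ‖φ k‖ ^ (2/p') * w k with hhhdef
  set aa : ℤ → ℂ := fun k => φ k * ((gg k / (gg k + hh k) : ℝ) : ℂ) with haadef
  set bb : ℤ → ℂ := fun k => φ k * ((hh k / (gg k + hh k) : ℝ) : ℂ) with hbbdef
  have hab2 : 2/p + 2/p' = 2 := by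
    have h := hpq
    have : 2/p + 2/p' = 2*(1/p + 1/p') := by ring
    rw [this, h]; norm_num
  have hgpos : ∀ k, φ k ≠ 0 → 0 < gg k := fun k hk =>
    mul_pos (Real.rpow_pos_of_pos (norm_pos_iff.mpr hk) _) (inv_pos.mpr (hw k))
  have hhpos : ∀ k, φ k ≠ 0 → 0 < hh k := fun k hk =>
    mul_pos (Real.rpow_pos_of_pos (norm_pos_iff.mpr hk) _) (hw k)
  have hsplit : ∀ k, aa k + bb k = φ k := by
    intro k
    by_cases hk : φ k = 0
    · simp [haadef, hbbdef, hk]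
    · have hgh : 0 < gg k + hh k := add_pos (hgpos k hk) (hhpos k hk)
      rw [haadef, hbbdef]
      simp only
      rw [← mul_add, ← Complex.ofReal_add, ← add_div, div_self hgh.ne',
        Complex.ofReal_one, mul_one]
  have hmm : ∀ k, φ k ≠ 0 → ‖φ k‖ * ‖φ k‖ = gg k * hh k := by
    intro k hk
    have hm : 0 < ‖φ k‖ := norm_pos_iff.mpr hk
    calc ‖φ k‖ * ‖φ k‖ = ‖φ k‖ ^ (2:ℝ) := by rw [rpow_two_eq, pow_two]
      _ = ‖φ k‖ ^ (2/p + 2/p') * 1 := by rw [hab2, mul_one]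
      _ = (‖φ k‖ ^ (2/p) * ‖φ k‖ ^ (2/p')) * ((w k)⁻¹ * w k) := by
          rw [← Real.rpow_add hm, inv_mul_cancel₀ (hw k).ne']
      _ = gg k * hh k := by rw [hggdef, hhhdef]; ring
  have hle : ∀ k, φ k ≠ 0 → ‖φ k‖ ≤ gg k + hh k := by
    intro k hk
    have hm : 0 < ‖φ k‖ := norm_pos_iff.mpr hk
    have h := hmm k hk
    nlinarith [sq_nonneg (gg k - hh k), (hgpos k hk), (hhpos k hk), hm]
  have haaw : ∀ k, ‖aa k‖ * w k ≤ ‖φ k‖ ^ (2/p) := by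
    intro k
    by_cases hk : φ k = 0
    · have : aa k = 0 := by rw [haadef]; simp [hk]
      rw [this, norm_zero, zero_mul]
      exact Real.rpow_nonneg (norm_nonneg _) _
    · have hgh : 0 < gg k + hh k := add_pos (hgpos k hk) (hhpos k hk)
      have hnaa : ‖aa k‖ = ‖φ k‖ * (gg k / (gg k + hh k)) := by
        rw [haadef]
        simp only
        rw [norm_mul, Complex.norm_real, Real.norm_eq_abs,
          abs_of_nonneg (div_nonneg (hgpos k hk).le hgh.le)]
      have hkey : ‖φ k‖ * (gg k / (gg k + hh k)) ≤ gg k := by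
        rw [mul_div_assoc', div_le_iff₀ hgh]
        calc ‖φ k‖ * gg k ≤ (gg k + hh k) * gg k :=
              mul_le_mul_of_nonneg_right (hle k hk) (hgpos k hk).le
          _ = gg k * (gg k + hh k) := by ring
      have hrw : ‖φ k‖ ^ (2/p) = gg k * w k := by
        rw [hggdef]
        simp only
        rw [mul_assoc, inv_mul_cancel₀ (hw k).ne', mul_one]
      rw [hnaa, hrw]
      exact mul_le_mul_of_nonneg_right hkey (hw k).le
  have hbbw : ∀ k, ‖bb k‖ * (w k)⁻¹ ≤ ‖φ k‖ ^ (2/p') := by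
    intro k
    by_cases hk : φ k = 0
    · have : bb k = 0 := by rw [hbbdef]; simp [hk]
      rw [this, norm_zero, zero_mul]
      exact Real.rpow_nonneg (norm_nonneg _) _
    · have hgh : 0 < gg k + hh k := add_pos (hgpos k hk) (hhpos k hk)
      have hnbb : ‖bb k‖ = ‖φ k‖ * (hh k / (gg k + hh k)) := by
        rw [hbbdef]
        simp only
        rw [norm_mul, Complex.norm_real, Real.norm_eq_abs,
          abs_of_nonneg (div_nonneg (hhpos k hk).le hgh.le)]
      have hkey : ‖φ k‖ * (hh k / (gg k + hh k)) ≤ hh k := by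
        rw [mul_div_assoc', div_le_iff₀ hgh]
        calc ‖φ k‖ * hh k ≤ (gg k + hh k) * hh k :=
              mul_le_mul_of_nonneg_right (hle k hk) (hhpos k hk).le
          _ = hh k * (gg k + hh k) := by ring
      have hrw : ‖φ k‖ ^ (2/p') = hh k * (w k)⁻¹ := by
        rw [hhhdef]
        simp only
        rw [mul_assoc, mul_inv_cancel₀ (hw k).ne', mul_one]
      rw [hnbb, hrw]
      exact mul_le_mul_of_nonneg_right hkey (inv_pos.mpr (hw k)).le
  -- finiteness of the two weighted norms
  have hterm : ∀ (q : ℝ), 0 < q → ∀ k : ℤ,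
      ENNReal.ofReal (‖φ k‖ ^ (2/q)) ^ q = ENNReal.ofReal (‖φ k‖ * 1) ^ (2:ℝ) := by
    intro q hq k
    rw [mul_one, ENNReal.ofReal_rpow_of_nonneg (Real.rpow_nonneg (norm_nonneg _) _) hq.le,
      ← Real.rpow_mul (norm_nonneg _), div_mul_cancel₀ _ hq.ne',
      ← ENNReal.ofReal_rpow_of_nonneg (norm_nonneg _) (by norm_num)]
  have hfinA : wNorm p w aa ≠ ⊤ := by
    refine ne_top_of_le_ne_top
      (ENNReal.rpow_ne_top_of_nonneg (y := 1/p) (by positivity) hS) ?_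
    rw [wNorm]
    apply ENNReal.rpow_le_rpow _ (by positivity)
    refine ENNReal.tsum_le_tsum fun k => ?_
    calc ENNReal.ofReal (‖aa k‖ * w k) ^ p
        ≤ ENNReal.ofReal (‖φ k‖ ^ (2/p)) ^ p :=
          ENNReal.rpow_le_rpow (ENNReal.ofReal_le_ofReal (haaw k)) hp0.le
      _ = ENNReal.ofReal (‖φ k‖ * 1) ^ (2:ℝ) := hterm p hp0 k
  have hfinB : wNorm p' (fun k => (w k)⁻¹) bb ≠ ⊤ := by
    refine ne_top_of_le_ne_top
      (ENNReal.rpow_ne_top_of_nonneg (y := 1/p') (by positivity) hS) ?_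
    rw [wNorm]
    apply ENNReal.rpow_le_rpow _ (by positivity)
    refine ENNReal.tsum_le_tsum fun k => ?_
    calc ENNReal.ofReal (‖bb k‖ * (w k)⁻¹) ^ p'
        ≤ ENNReal.ofReal (‖φ k‖ ^ (2/p')) ^ p' :=
          ENNReal.rpow_le_rpow (ENNReal.ofReal_le_ofReal (hbbw k)) hp'0.le
      _ = ENNReal.ofReal (‖φ k‖ * 1) ^ (2:ℝ) := hterm p' hp'0 k
  -- coordinatewise convergence of truncations
  have hcoord : ∀ j : ℤ, Tendsto (fun n => T (trunc φ n) j) atTop (𝓝 (T φ j)) := by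
    intro j
    have hA := tendsto_apply_trunc hp0 hw T h1 aa hfinA j
    have hB := tendsto_apply_trunc hp'0 (fun k => inv_pos.mpr (hw k)) T h2 bb hfinB j
    have hsum := hA.add hB
    have heq2 : T aa j + T bb j = T φ j := by
      have hφeq : aa + bb = φ := funext hsplit
      rw [← hφeq, map_add]
      rfl
    rw [heq2] at hsum
    refine hsum.congr fun n => ?_
    have htr : trunc aa n + trunc bb n = trunc φ n := by
      funext k
      by_cases hk : k ∈ Finset.Icc (-(n:ℤ)) n
      · simp [trunc, hk, hsplit k]
      · simp [trunc, hk]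
    rw [← htr, map_add]
    rfl
  -- the bound on every finite partial sum
  have hC : ∀ G : Finset ℤ, ∑ j ∈ G, ‖T φ j‖ ^ 2 ≤ (M₁ * M₂) * S.toReal := by
    intro G
    have hn : ∀ n : ℕ, ∑ j ∈ G, ‖T (trunc φ n) j‖ ^ 2 ≤ (M₁ * M₂) * S.toReal := by
      intro n
      have hsb := sum_sq_bound p p' hpc w hw T M₁ M₂ hM₁ hM₂ h1 h2 (trunc φ n)
        (Finset.Icc (-(n:ℤ)) n) (fun k hk => by simp [trunc, hk]) G
      refine hsb.trans (mul_le_mul_of_nonneg_left ?_ (mul_nonneg hM₁.le hM₂.le))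
      have e1 : ∑ k ∈ Finset.Icc (-(n:ℤ)) n, ‖trunc φ n k‖ ^ 2
          = ∑ k ∈ Finset.Icc (-(n:ℤ)) n, ‖φ k‖ ^ 2 :=
        Finset.sum_congr rfl fun k hk => by simp [trunc, hk]
      rw [e1]
      rw [← ENNReal.ofReal_le_iff_le_toReal hS]
      calc ENNReal.ofReal (∑ k ∈ Finset.Icc (-(n:ℤ)) n, ‖φ k‖ ^ 2)
          = ∑ k ∈ Finset.Icc (-(n:ℤ)) n, ENNReal.ofReal (‖φ k‖ * 1) ^ (2:ℝ) := by
            rw [ENNReal.ofReal_sum_of_nonneg (fun k _ => sq_nonneg _)]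
            refine Finset.sum_congr rfl fun k _ => ?_
            rw [mul_one, ← rpow_two_eq,
              ← ENNReal.ofReal_rpow_of_nonneg (norm_nonneg _) (by norm_num)]
        _ ≤ S := ENNReal.sum_le_tsum _
    have hlim : Tendsto (fun n => ∑ j ∈ G, ‖T (trunc φ n) j‖ ^ 2) atTop
        (𝓝 (∑ j ∈ G, ‖T φ j‖ ^ 2)) :=
      tendsto_finset_sum G fun j _ => ((hcoord j).norm.pow 2)
    exact le_of_tendsto hlim (Eventually.of_forall hn)
  -- conclusion
  have hfinal := wNorm_le_of_forall_sum (r := 2) (by norm_num)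
    (u := fun _ => (1:ℝ)) (fun k => zero_le_one) (T φ)
    (C := (M₁ * M₂) * S.toReal) (fun G => by
      calc ∑ j ∈ G, (‖T φ j‖ * 1) ^ (2:ℝ) = ∑ j ∈ G, ‖T φ j‖ ^ 2 :=
            Finset.sum_congr rfl fun j _ => by rw [mul_one, rpow_two_eq]
        _ ≤ (M₁ * M₂) * S.toReal := hC G)
  refine hfinal.trans (le_of_eq ?_)
  have hST : (0:ℝ) ≤ S.toReal := ENNReal.toReal_nonneg
  rw [Real.mul_rpow (mul_nonneg hM₁.le hM₂.le) hST,
    ENNReal.ofReal_mul (Real.rpow_nonneg (mul_nonneg hM₁.le hM₂.le) _)]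
  congr 1
  · rw [← Real.sqrt_eq_rpow]
  · rw [hwn, ← ENNReal.ofReal_rpow_of_nonneg hST (by norm_num), ENNReal.ofReal_toReal hS]
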